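/- arXiv:1210.1200 — 2 statements merged into one kernel-verified Lean document; each statement's English description precedes it below -/
import Mathlib

section
/- For every stream s and every natural number n: the suffix s|n is infinitely often red (rep (s|n)) if and only if n is antifounded with respect to the relation ≻ₛ. In particular (n = 0), rep s holds iff af ≻ₛ 0. -/
/-- The suffix of a stream at position `n`. -/
def suff (s : ℕ → Bool) (n : ℕ) : ℕ → Bool := fun k => s (n + k)

/-- The weak-until predicate transformer (greatest fixed point, impredicative). -/
def W (X : (ℕ → Bool) → Prop) (s : ℕ → Bool) : Prop :=
  ∃ Y : (ℕ → Bool) → Prop, Y s ∧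
    ∀ t, Y t → (t 0 = true → X (suff t 1)) ∧ (t 0 = false → Y (suff t 1))

/-- A stream is almost always blue: least fixed point of `W`. -/
def pre (s : ℕ → Bool) : Prop :=
  ∀ P : (ℕ → Bool) → Prop, (∀ t, W P t → P t) → P s

/-- The strong-until predicate transformer (inductive). -/
inductive U (X : (ℕ → Bool) → Prop) : (ℕ → Bool) → Prop
  | red : ∀ t, t 0 = true → X (suff t 1) → U X t
  | blue : ∀ t, t 0 = false → U X (suff t 1) → U X t

/-- A stream is infinitely often red: greatest fixed point of `U`. -/
def rep (s : ℕ → Bool) : Prop :=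
  ∃ P : (ℕ → Bool) → Prop, P s ∧ ∀ t, P t → U P t

/-- `succs s n m` : `m` is the position following the first red position at or after `n`. -/
def succs (s : ℕ → Bool) (n m : ℕ) : Prop :=
  ∃ l, n ≤ l ∧ (∀ k, n ≤ k → k < l → s k = false) ∧ s l = true ∧ m = l + 1

/-- The set of red positions of a stream. -/
def Reds (s : ℕ → Bool) : Set ℕ := {n | s n = true}

/-- The set of blue positions of a stream. -/
def Blues (s : ℕ → Bool) : Set ℕ := {n | s n = false}

/-- A colist is duplicate-free over `A`: entries lie in `A` and entries at
distinct positions are distinct. -/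
def DupFree (l : Stream'.Seq ℕ) (A : Set ℕ) : Prop :=
  (∀ n x, l.get? n = some x → x ∈ A) ∧
  (∀ m n x y, m ≠ n → l.get? m = some x → l.get? n = some y → x ≠ y)

/-- A set of naturals is streamless if every duplicate-free colist over it is finite. -/
def Streamless (A : Set ℕ) : Prop :=
  ∀ l : Stream'.Seq ℕ, DupFree l A → l.Terminates

/-- A set of naturals is almost full if every strictly increasing sequence hits it. -/
def AlmostFull (A : Set ℕ) : Prop :=
  ∀ i : ℕ → ℕ, StrictMono i → ∃ n, i n ∈ A

/-- A colist is a descending chain of the relation `r` starting at `x`. -/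
def IsDescChain (r : ℕ → ℕ → Prop) (x : ℕ) (l : Stream'.Seq ℕ) : Prop :=
  (∀ y, l.get? 0 = some y → r x y) ∧
  (∀ n a b, l.get? n = some a → l.get? (n + 1) = some b → r a b)

/-- `r` is strongly normalizing at `x`: every descending chain starting at `x` is finite. -/
def SN (r : ℕ → ℕ → Prop) (x : ℕ) : Prop :=
  ∀ l : Stream'.Seq ℕ, IsDescChain r x l → l.Terminates

/-- `n` is antifounded wrt `r`: greatest fixed point of the one-step descent operator. -/
def af (r : ℕ → ℕ → Prop) (n : ℕ) : Prop :=
  ∃ Q : ℕ → Prop, Q n ∧ ∀ k, Q k → ∃ m, r k m ∧ Q m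

/-- `atmost n s`: fewer than `n` red positions up to every position `m`. -/
def atmost (n : ℕ) (s : ℕ → Bool) : Prop :=
  ∀ m, ((Finset.range (m + 1)).filter (fun k => s k = true)).card < n

/-- Iterates of the weak-until operator starting from the empty predicate. -/
def Fiter : ℕ → (ℕ → Bool) → Prop
  | 0 => fun _ => False
  | n + 1 => W (Fiter n)

/-- The ω-iterate of the weak-until operator. -/
def Fomega (s : ℕ → Bool) : Prop := ∃ n, Fiter n s

/-- The Lesser Principle of Omniscience. -/
def LPO : Prop := ∀ s : ℕ → Bool, (∃ n, s n = true) ∨ (∀ n, s n = false)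

/-- Markov's Principle. -/
def MP : Prop := ∀ s : ℕ → Bool, ¬(∀ n, s n = false) → ∃ n, s n = true

/-- Noetherian sets of naturals. -/
inductive Noeth : Set ℕ → Prop
  | intro : ∀ A : Set ℕ, (∀ x ∈ A, Noeth (A \ {x})) → Noeth A

lemma suff_suff (s : ℕ → Bool) (k : ℕ) : suff (suff s k) 1 = suff s (k + 1) := by
  funext j; simp [suff, Nat.add_assoc, Nat.add_comm 1 j]

lemma U_extract (s : ℕ → Bool) (P : (ℕ → Bool) → Prop) :
    ∀ t, U P t → ∀ k, t = suff s k →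
      ∃ l, k ≤ l ∧ (∀ j, k ≤ j → j < l → s j = false) ∧ s l = true ∧ P (suff s (l + 1)) := by
  intro t h
  induction h with
  | red t ht hx =>
    intro k hk
    refine ⟨k, le_refl k, fun j h1 h2 => absurd h1 (by omega), ?_, ?_⟩
    · have := ht; rw [hk] at this; simpa [suff] using this
    · rw [hk, suff_suff] at hx; exact hx
  | blue t ht _ ih =>
    intro k hk
    obtain ⟨l, h1, h2, h3, h4⟩ := ih (k + 1) (by rw [hk, suff_suff])
    refine ⟨l, by omega, ?_, h3, h4⟩
    intro j hj hjl
    rcases Nat.eq_or_lt_of_le hj with rfl | hlt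
    · rw [hk] at ht; simpa [suff] using ht
    · exact h2 j (by omega) hjl

lemma U_build (s : ℕ → Bool) (P : (ℕ → Bool) → Prop) :
    ∀ d k l, l = k + d → (∀ j, k ≤ j → j < l → s j = false) → s l = true →
      P (suff s (l + 1)) → U P (suff s k) := by
  intro d
  induction d with
  | zero =>
    intro k l hl _ hr hp
    subst hl
    exact U.red _ (by simpa [suff] using hr) (by rw [suff_suff]; simpa using hp)
  | succ d ih =>
    intro k l hl hb hr hp
    refine U.blue _ (by simpa [suff] using hb k (le_refl k) (by omega)) ?_
    rw [suff_suff]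
    exact ih (k + 1) l (by omega) (fun j h1 h2 => hb j (by omega) h2) hr hp

theorem stmt_5 : ∀ (s : ℕ → Bool) (n : ℕ), rep (suff s n) ↔ af (succs s) n := by
  intro s n
  constructor
  · rintro ⟨P, hPn, hP⟩
    refine ⟨fun k => P (suff s k), hPn, ?_⟩
    intro k hk
    obtain ⟨l, h1, h2, h3, h4⟩ := U_extract s P _ (hP _ hk) k rfl
    exact ⟨l + 1, ⟨l, h1, h2, h3, rfl⟩, h4⟩
  · rintro ⟨Q, hQn, hQ⟩
    refine ⟨fun t => ∃ k, Q k ∧ t = suff s k, ⟨n, hQn, rfl⟩, ?_⟩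
    rintro t ⟨k, hk, rfl⟩
    obtain ⟨m, ⟨l, h1, h2, h3, rfl⟩, hm⟩ := hQ k hk
    exact U_build s _ (l - k) k l (by omega) h2 h3 ⟨l + 1, hm, rfl⟩
end

section
/- For every stream s: s is almost always blue (pre s) if and only if the set Reds s of red positions of s is Noetherian. -/
lemma suff_zero (t : ℕ → Bool) : suff t 0 = t := by
  funext k; simp [suff]

lemma suff_suff_s19 (t : ℕ → Bool) (m n : ℕ) : suff (suff t m) n = suff t (m + n) := by
  funext k; simp [suff, Nat.add_assoc]

lemma noeth_of_finite {A : Set ℕ} (h : A.Finite) : Noeth A := by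
  generalize hc : A.ncard = n
  induction n using Nat.strong_induction_on generalizing A with
  | _ n IH =>
    subst hc
    exact Noeth.intro A (fun x hx =>
      IH _ (Set.ncard_diff_singleton_lt_of_mem hx h) h.diff rfl)

lemma finite_of_noeth {A : Set ℕ} (h : Noeth A) : A.Finite := by
  induction h with
  | intro A h IH =>
    rcases Set.eq_empty_or_nonempty A with hA | ⟨x, hx⟩
    · simp [hA]
    · have : A = insert x (A \ {x}) := by
        rw [Set.insert_diff_singleton, Set.insert_eq_of_mem hx]
      rw [this]
      exact (IH x hx).insert x

lemma finite_of_pre {s : ℕ → Bool} (h : pre s) : (Reds s).Finite := by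
  classical
  apply h (fun t => (Reds t).Finite)
  rintro t ⟨Y, hYt, hY⟩
  have key : ∀ n, (∀ k < n, t k = false) → Y (suff t n) := by
    intro n
    induction n with
    | zero => intro _; rw [suff_zero]; exact hYt
    | succ n ih =>
      intro hblue
      have h1 : Y (suff t n) := ih (fun k hk => hblue k (Nat.lt_succ_of_lt hk))
      have h2 : (suff t n) 0 = false := by
        simpa [suff] using hblue n (Nat.lt_succ_self n)
      have := (hY _ h1).2 h2
      rwa [suff_suff_s19] at this
  by_cases hr : ∃ l, t l = true
  · set l := Nat.find hr with hl
    have hlt : t l = true := Nat.find_spec hr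
    have hblue : ∀ k < l, t k = false := by
      intro k hk
      have := Nat.find_min hr hk
      simpa using this
    have hYl : Y (suff t l) := key l hblue
    have h0 : (suff t l) 0 = true := by simpa [suff] using hlt
    have hfin : (Reds (suff (suff t l) 1)).Finite := (hY _ hYl).1 h0
    rw [suff_suff_s19] at hfin
    have hsub : Reds t ⊆ Set.Iio (l + 1) ∪ (fun k => l + 1 + k) '' Reds (suff t (l + 1)) := by
      intro m hm
      by_cases hml : m < l + 1
      · exact Or.inl hml
      · refine Or.inr ⟨m - (l + 1), ?_, by simp only []; omega⟩
        show suff t (l + 1) (m - (l + 1)) = true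
        have : l + 1 + (m - (l + 1)) = m := by omega
        simpa [suff, this, Reds] using hm
    exact Set.Finite.subset (Set.Finite.union (Set.finite_Iio _) (hfin.image _)) hsub
  · have : Reds t = ∅ := by
      ext m
      simp only [Reds, Set.mem_setOf_eq, Set.mem_empty_iff_false, iff_false]
      exact fun hm => hr ⟨m, hm⟩
    simp [this]

lemma pre_of_finite {s : ℕ → Bool} (hfin : (Reds s).Finite) : pre s := by
  classical
  generalize hc : (Reds s).ncard = n
  induction n using Nat.strong_induction_on generalizing s with
  | _ n IH =>
  intro P hP
  apply hP
  refine ⟨fun t => ∃ m, (∀ k < m, s k = false) ∧ t = suff s m,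
    ⟨0, by simp, (suff_zero s).symm⟩, ?_⟩
  rintro t ⟨m, hblue, rfl⟩
  constructor
  · intro hred
    have hsm : s m = true := by simpa [suff] using hred
    rw [suff_suff_s19]
    have hinj : Function.Injective (fun k => m + 1 + k) := fun a b h => by
      simp only [] at h; omega
    have hsub : (fun k => m + 1 + k) '' Reds (suff s (m + 1)) ⊂ Reds s := by
      constructor
      · rintro x ⟨k, hk, rfl⟩
        simpa [Reds, suff] using hk
      · intro hsup
        have : m ∈ (fun k => m + 1 + k) '' Reds (suff s (m + 1)) := hsup hsm
        obtain ⟨k, _, hk⟩ := this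
        simp only [] at hk; omega
    have hfin' : (Reds (suff s (m + 1))).Finite := by
      have := hfin.subset hsub.subset
      exact Set.Finite.of_finite_image this (hinj.injOn)
    have hlt : (Reds (suff s (m + 1))).ncard < n := by
      rw [← hc, ← Set.ncard_image_of_injective _ hinj]
      exact Set.ncard_lt_ncard hsub hfin
    exact IH _ hlt hfin' rfl P hP
  · intro hblue0
    refine ⟨m + 1, ?_, suff_suff_s19 s m 1⟩
    intro k hk
    rcases Nat.lt_succ_iff_lt_or_eq.mp hk with h | h
    · exact hblue k h
    · subst h; simpa [suff] using hblue0

theorem stmt_19 : ∀ s : ℕ → Bool, pre s ↔ Noeth (Reds s) := by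
  intro s
  exact ⟨fun h => noeth_of_finite (finite_of_pre h),
    fun h => pre_of_finite (finite_of_noeth h)⟩
end
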